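/- Zero-infinity law for the first moment, case 1 + ρ ln μ(0) > 0: Assume Γ(0) < Γ(1) and, with ρ > 0, that 1 + ρ ln μ(0) > 0. Then for any ρ-admissible scaling L : ℕ → ℕ, the expected number of isolated nodes E[I_n(L_n)] in the homogeneous binary MAG model M(n;L_n) converges, as n → ∞, to ∞ if 1 + ρ ln Γ(0) < 0, and to 0 if 1 + ρ ln Γ(0) > 0. -/

import Mathlib

open MeasureTheory Filter

/-- Bernoulli measure on `Bool` with parameter `p` = probability of `true`. -/
noncomputable def bern (p : ℝ) : Measure Bool :=
  (Real.toNNReal p) • Measure.dirac true + (Real.toNNReal (1 - p)) • Measure.dirac false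

/-- Uniform distribution on `[0,1]`. -/
noncomputable def unif01 : Measure ℝ := MeasureTheory.volume.restrict (Set.Icc (0:ℝ) 1)

/-- The probability space of the homogeneous binary MAG model `M(n;L)`:
i.i.d. Bernoulli attribute bits and, independently, i.i.d. Uniform(0,1) variables. -/
noncomputable def magMeasure (n L : ℕ) (p : ℝ) :
    Measure ((Fin n → Fin L → Bool) × (Fin n × Fin n → ℝ)) :=
  (Measure.pi fun _ : Fin n => Measure.pi fun _ : Fin L => bern p).prod
    (Measure.pi fun _ : Fin n × Fin n => unif01)

/-- `Q_L(a,b) = ∏_{ℓ} q(a_ℓ, b_ℓ)`. -/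
def QL {L : ℕ} (q : Bool → Bool → ℝ) (a b : Fin L → Bool) : ℝ :=
  ∏ ℓ : Fin L, q (a ℓ) (b ℓ)

/-- Distinct nodes `u, v` are adjacent iff `U(u,v) ≤ Q_L(A(u),A(v))`, where the uniform
variable attached to the unordered pair `{u,v}` is the one indexed by `(min u v, max u v)`. -/
def Adj {n L : ℕ} (q : Bool → Bool → ℝ)
    (ω : (Fin n → Fin L → Bool) × (Fin n × Fin n → ℝ)) (u v : Fin n) : Prop :=
  u ≠ v ∧ ω.2 (min u v, max u v) ≤ QL q (ω.1 u) (ω.1 v)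

/-- Node `u` is isolated if it is adjacent to no other node. -/
def Isolated {n L : ℕ} (q : Bool → Bool → ℝ)
    (ω : (Fin n → Fin L → Bool) × (Fin n × Fin n → ℝ)) (u : Fin n) : Prop :=
  ∀ v, ¬ Adj q ω u v

/-- `S_L(u)`: the number of attributes exhibited by node `u`. -/
def Scount {n L : ℕ} (ω : (Fin n → Fin L → Bool) × (Fin n × Fin n → ℝ)) (u : Fin n) : ℕ :=
  (Finset.univ.filter fun ℓ : Fin L => ω.1 u ℓ = true).card

open scoped Classical in
/-- `I_n(L)`: the number of isolated nodes. -/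
noncomputable def numIsolated {n L : ℕ} (q : Bool → Bool → ℝ)
    (ω : (Fin n → Fin L → Bool) × (Fin n × Fin n → ℝ)) : ℕ :=
  (Finset.univ.filter fun u : Fin n => Isolated q ω u).card

open scoped Classical in
/-- `I_n^{(k)}(L)`: the number of isolated nodes `u` with `S_L(u) = k`. -/
noncomputable def numIsolatedWith {n L : ℕ} (q : Bool → Bool → ℝ) (k : ℕ)
    (ω : (Fin n → Fin L → Bool) × (Fin n × Fin n → ℝ)) : ℕ :=
  (Finset.univ.filter fun u : Fin n => Isolated q ω u ∧ Scount ω u = k).card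

open scoped Classical in
/-- `ξ^{(k)}(u)`: the indicator that node `u` is isolated and `S_L(u) = k`. -/
noncomputable def xiInd {n L : ℕ} (q : Bool → Bool → ℝ) (k : ℕ)
    (ω : (Fin n → Fin L → Bool) × (Fin n × Fin n → ℝ)) (u : Fin n) : ℝ :=
  if Isolated q ω u ∧ Scount ω u = k then 1 else 0

/-- `Γ(a) = μ(0) q(a,0) + μ(1) q(a,1)`, with `μ(1) = μ1`, `μ(0) = 1 - μ1`. -/
def Gam (μ1 : ℝ) (q : Bool → Bool → ℝ) (a : Bool) : ℝ :=
  (1 - μ1) * q a false + μ1 * q a true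

/-- A scaling `L : ℕ → ℕ` is `ρ`-admissible if `L_n ~ ρ ln n` as `n → ∞`. -/
def Admissible (ρ : ℝ) (L : ℕ → ℕ) : Prop :=
  Asymptotics.IsEquivalent Filter.atTop (fun n => (L n : ℝ)) (fun n => ρ * Real.log n)

/-- `G(ν,μ) = (μ/ν)^ν ((1-μ)/(1-ν))^{1-ν}` (real powers; the conventions at `ν = 0,1`
agree with the continuous extension). -/
noncomputable def Gfun (ν μ : ℝ) : ℝ :=
  (μ / ν) ^ ν * ((1 - μ) / (1 - ν)) ^ (1 - ν)

/-- `Q*_L(a) = E[Q_L(a,A)]`, `A` a vector of `L` i.i.d. Bernoulli(μ1) bits. -/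
noncomputable def Qstar {L : ℕ} (μ1 : ℝ) (q : Bool → Bool → ℝ) (a : Fin L → Bool) : ℝ :=
  ∫ b, QL q a b ∂(Measure.pi fun _ : Fin L => bern μ1)

/-- `Q**_L(a,b) = E[Q_L(a,A) Q_L(b,A)]`. -/
noncomputable def Qstarstar {L : ℕ} (μ1 : ℝ) (q : Bool → Bool → ℝ) (a b : Fin L → Bool) : ℝ :=
  ∫ c, QL q a c * QL q b c ∂(Measure.pi fun _ : Fin L => bern μ1)

/-- `Q̃_L(a,b) = Q*_L(a) + Q*_L(b) − Q**_L(a,b)`. -/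
noncomputable def Qtilde {L : ℕ} (μ1 : ℝ) (q : Bool → Bool → ℝ) (a b : Fin L → Bool) : ℝ :=
  Qstar μ1 q a + Qstar μ1 q b - Qstarstar μ1 q a b

open scoped ENNReal

def μB (μ1 : ℝ) : Bool → ℝ := fun t => if t then μ1 else 1 - μ1

lemma bern_singleton (p : ℝ) (hp0 : 0 ≤ p) (hp1 : p ≤ 1) (x : Bool) :
    bern p {x} = ENNReal.ofReal (μB p x) := by
  cases x <;>
  · simp [bern, μB, Measure.dirac_apply, ENNReal.ofReal, smul_eq_mul]

lemma bern_prob (p : ℝ) (hp0 : 0 ≤ p) (hp1 : p ≤ 1) : IsProbabilityMeasure (bern p) := by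
  constructor
  have : (Set.univ : Set Bool) = {true} ∪ {false} := by
    ext b; cases b <;> simp
  rw [this, measure_union (by simp) (by simp), bern_singleton p hp0 hp1,
    bern_singleton p hp0 hp1]
  simp only [μB, if_true, if_false, Bool.false_eq_true]
  rw [← ENNReal.ofReal_add hp0 (by linarith)]
  norm_num

instance unif01_prob : IsProbabilityMeasure unif01 := by
  constructor
  simp [unif01, Real.volume_Icc]

lemma unif01_Ioi (c : ℝ) (hc0 : 0 ≤ c) (hc1 : c ≤ 1) :
    unif01 (Set.Ioi c) = ENNReal.ofReal (1 - c) := by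
  rw [unif01, Measure.restrict_apply measurableSet_Ioi]
  have : Set.Ioi c ∩ Set.Icc 0 1 = Set.Ioc c 1 := by
    ext x; simp only [Set.mem_inter_iff, Set.mem_Ioi, Set.mem_Icc, Set.mem_Ioc]
    constructor
    · rintro ⟨h1, h2, h3⟩; exact ⟨h1, h3⟩
    · rintro ⟨h1, h2⟩; exact ⟨h1, le_trans hc0 h1.le, h2⟩
  rw [this, Real.volume_Ioc]


section slice
variable {n L : ℕ} (q : Bool → Bool → ℝ) (hq : ∀ a b, 0 < q a b ∧ q a b < 1)

include hq in
lemma QL_pos {a b : Fin L → Bool} : 0 < QL q a b :=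
  Finset.prod_pos fun ℓ _ => (hq _ _).1

include hq in
lemma QL_le_one {a b : Fin L → Bool} : QL q a b ≤ 1 :=
  Finset.prod_le_one (fun ℓ _ => (hq _ _).1.le) (fun ℓ _ => (hq _ _).2.le)

lemma measurableSet_isolated (u : Fin n) :
    MeasurableSet {ω : (Fin n → Fin L → Bool) × (Fin n × Fin n → ℝ) | Isolated q ω u} := by
  have h : {ω : (Fin n → Fin L → Bool) × (Fin n × Fin n → ℝ) | Isolated q ω u}
      = ⋂ v, {ω : (Fin n → Fin L → Bool) × (Fin n × Fin n → ℝ) | Adj q ω u v}ᶜ := by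
    ext ω; simp [Isolated]
  rw [h]
  refine MeasurableSet.iInter fun v => MeasurableSet.compl ?_
  have h2 : {ω : (Fin n → Fin L → Bool) × (Fin n × Fin n → ℝ) | Adj q ω u v}
      = {ω : (Fin n → Fin L → Bool) × (Fin n × Fin n → ℝ) | u ≠ v}
        ∩ {ω : (Fin n → Fin L → Bool) × (Fin n × Fin n → ℝ) |
            ω.2 (min u v, max u v) ≤ QL q (ω.1 u) (ω.1 v)} := rfl
  rw [h2]
  refine MeasurableSet.inter ?_ ?_
  · by_cases h3 : u = v
    · simp only [h3, ne_eq, not_true_eq_false]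
      exact MeasurableSet.empty.congr (by ext ω; simp)
    · exact MeasurableSet.univ.congr (by ext ω; simp [h3])
  · have hg : Measurable (fun ω : (Fin n → Fin L → Bool) × (Fin n × Fin n → ℝ) =>
        QL q (ω.1 u) (ω.1 v)) :=
      (measurable_of_countable (fun A : Fin n → Fin L → Bool => QL q (A u) (A v))).comp
        measurable_fst
    exact measurableSet_le measurable_snd.eval hg

lemma pair_injOn (u : Fin n) : ∀ v ∈ Finset.univ.erase u, ∀ w ∈ Finset.univ.erase u,
    ((min u v, max u v) : Fin n × Fin n) = (min u w, max u w) → v = w := by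
  intro v hv w hw h
  have hvu : v ≠ u := (Finset.mem_erase.mp hv).1
  have hwu : w ≠ u := (Finset.mem_erase.mp hw).1
  rcases lt_or_gt_of_ne hvu with h1 | h1 <;> rcases lt_or_gt_of_ne hwu with h2 | h2 <;>
    simp only [Prod.mk.injEq, min_eq_left, max_eq_right, min_eq_right, max_eq_left,
      h1.le, h2.le] at h
  all_goals first
    | exact h.1
    | exact h.2
    | exact absurd h.1 hvu
    | exact absurd h.2 hvu
    | exact absurd h.1.symm hwu
    | exact absurd h.2.symm hwu

end slice

section slice2
variable {n L : ℕ} (q : Bool → Bool → ℝ)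

lemma slice_measure (hq : ∀ a b, 0 < q a b ∧ q a b < 1) (u : Fin n)
    (a : Fin n → Fin L → Bool) :
    (Measure.pi fun _ : Fin n × Fin n => unif01)
      {U : Fin n × Fin n → ℝ | ∀ v, ¬ Adj q (a, U) u v}
    = ∏ v ∈ Finset.univ.erase u, ENNReal.ofReal (1 - QL q (a u) (a v)) := by
  classical
  set t : Fin n × Fin n → Set ℝ := fun i =>
    if i.1 = u ∧ u < i.2 then Set.Ioi (QL q (a u) (a i.2))
    else if i.2 = u ∧ i.1 < u then Set.Ioi (QL q (a u) (a i.1)) else Set.univ with ht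
  have hAdj : ∀ (U : Fin n × Fin n → ℝ) v,
      (¬ Adj q (a, U) u v) ↔ (u = v ∨ QL q (a u) (a v) < U (min u v, max u v)) := by
    intro U v
    rw [Adj, not_and_or, not_le, not_ne_iff]
  have hset : {U : Fin n × Fin n → ℝ | ∀ v, ¬ Adj q (a, U) u v} = Set.pi Set.univ t := by
    ext U
    simp only [Set.mem_setOf_eq, Set.mem_pi, Set.mem_univ, forall_true_left]
    constructor
    · intro h i
      rw [ht]
      by_cases h1 : i.1 = u ∧ u < i.2
      · simp only [if_pos h1]
        have hv := (hAdj U i.2).mp (h i.2)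
        rcases hv with hv | hv
        · exact absurd hv.symm (ne_of_gt h1.2)
        · have : (min u i.2, max u i.2) = i := by
            rw [min_eq_left h1.2.le, max_eq_right h1.2.le, ← h1.1]
          rw [this] at hv
          exact hv
      · simp only [if_neg h1]
        by_cases h2 : i.2 = u ∧ i.1 < u
        · simp only [if_pos h2]
          have hv := (hAdj U i.1).mp (h i.1)
          rcases hv with hv | hv
          · exact absurd hv.symm (ne_of_lt h2.2)
          · have : (min u i.1, max u i.1) = i := by
              rw [min_eq_right h2.2.le, max_eq_left h2.2.le, ← h2.1]
            rw [this] at hv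
            exact hv
        · simp only [if_neg h2, Set.mem_univ]
    · intro h v
      rw [hAdj]
      rcases eq_or_ne u v with hv | hv
      · exact Or.inl hv
      rcases lt_or_gt_of_ne hv with h1 | h1
      · right
        rw [min_eq_left h1.le, max_eq_right h1.le]
        have := h (u, v)
        simp only [ht] at this
        rw [if_pos ⟨trivial, h1⟩] at this
        exact this
      · right
        rw [min_eq_right h1.le, max_eq_left h1.le]
        have := h (v, u)
        simp only [ht] at this
        rw [if_neg (by rintro ⟨hh, hh2⟩; exact lt_irrefl u hh2),
          if_pos ⟨trivial, h1⟩] at this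
        exact this
  rw [hset, Measure.pi_pi]
  have hsub : (∏ i : Fin n × Fin n, unif01 (t i))
      = ∏ i ∈ (Finset.univ.erase u).image
          (fun v => ((min u v, max u v) : Fin n × Fin n)), unif01 (t i) := by
    refine (Finset.prod_subset (Finset.subset_univ _) ?_).symm
    intro i _ hi
    simp only [ht]
    rw [if_neg ?_, if_neg ?_]
    · exact measure_univ
    · rintro ⟨h2, h3⟩
      exact hi (Finset.mem_image.mpr ⟨i.1, Finset.mem_erase.mpr ⟨ne_of_lt h3, Finset.mem_univ _⟩,
        by rw [min_eq_right h3.le, max_eq_left h3.le, ← h2]⟩)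
    · rintro ⟨h2, h3⟩
      exact hi (Finset.mem_image.mpr ⟨i.2, Finset.mem_erase.mpr ⟨ne_of_gt h3, Finset.mem_univ _⟩,
        by rw [min_eq_left h3.le, max_eq_right h3.le, ← h2]⟩)
  rw [hsub, Finset.prod_image (pair_injOn u)]
  refine Finset.prod_congr rfl fun v hv => ?_
  have hvu : v ≠ u := (Finset.mem_erase.mp hv).1
  rcases lt_or_gt_of_ne hvu with h1 | h1
  · simp only [ht, min_eq_right h1.le, max_eq_left h1.le]
    rw [if_neg (by rintro ⟨hh, hh2⟩; exact lt_irrefl u hh2), if_pos ⟨trivial, h1⟩]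
    exact unif01_Ioi _ (QL_pos q hq).le (QL_le_one q hq)
  · simp only [ht, min_eq_left h1.le, max_eq_right h1.le]
    rw [if_pos ⟨trivial, h1⟩]
    exact unif01_Ioi _ (QL_pos q hq).le (QL_le_one q hq)

end slice2

instance bern_finite (p : ℝ) : IsFiniteMeasure (bern p) := by
  constructor
  rw [bern]
  simp only [Measure.coe_add, Measure.coe_smul, Pi.add_apply, Pi.smul_apply]
  simp only [ENNReal.smul_def, smul_eq_mul]
  exact ENNReal.add_lt_top.mpr ⟨ENNReal.mul_lt_top ENNReal.coe_lt_top (measure_lt_top _ _),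
    ENNReal.mul_lt_top ENNReal.coe_lt_top (measure_lt_top _ _)⟩

section prob
variable {n L : ℕ} (q : Bool → Bool → ℝ) (μ1 : ℝ)

-- singleton mass of the attribute measure
lemma attr_singleton (a : Fin n → Fin L → Bool) :
    (Measure.pi fun _ : Fin n => Measure.pi fun _ : Fin L => bern μ1) {a}
      = ∏ w : Fin n, ∏ ℓ : Fin L, bern μ1 {a w ℓ} := by
  rw [← Set.univ_pi_singleton a, Measure.pi_pi]
  refine Finset.prod_congr rfl fun w _ => ?_
  rw [← Set.univ_pi_singleton (a w), Measure.pi_pi]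

lemma iso_prob (hq : ∀ a b, 0 < q a b ∧ q a b < 1) (u : Fin n) :
    magMeasure n L μ1 {ω | Isolated q ω u}
      = ∑ a : Fin n → Fin L → Bool,
          (∏ w : Fin n, ∏ ℓ : Fin L, bern μ1 {a w ℓ})
            * ∏ v ∈ Finset.univ.erase u, ENNReal.ofReal (1 - QL q (a u) (a v)) := by
  rw [magMeasure, Measure.prod_apply (measurableSet_isolated q u)]
  have h1 : ∀ a : Fin n → Fin L → Bool,
      (Prod.mk a ⁻¹' {ω : (Fin n → Fin L → Bool) × (Fin n × Fin n → ℝ) | Isolated q ω u})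
        = {U : Fin n × Fin n → ℝ | ∀ v, ¬ Adj q (a, U) u v} := fun a => rfl
  simp_rw [h1, slice_measure q hq u]
  rw [lintegral_fintype]
  refine Finset.sum_congr rfl fun a _ => ?_
  rw [attr_singleton, mul_comm]

-- the factorization over nodes
lemma card_ne (u : Fin n) : Fintype.card {v : Fin n // v ≠ u} = n - 1 := by
  have := Fintype.card_subtype_compl (fun v : Fin n => v = u)
  simp only [Fintype.card_subtype_eq, Fintype.card_fin] at this
  exact this

lemma factorize (m : (Fin L → Bool) → ℝ≥0∞) (f : (Fin L → Bool) → (Fin L → Bool) → ℝ≥0∞)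
    (u : Fin n) :
    (∑ a : Fin n → Fin L → Bool,
        (∏ w : Fin n, m (a w)) * ∏ v ∈ Finset.univ.erase u, f (a u) (a v))
      = ∑ b : Fin L → Bool, m b * (∑ c : Fin L → Bool, m c * f b c) ^ (n - 1) := by
  classical
  have step1 : ∀ a : Fin n → Fin L → Bool,
      (∏ w : Fin n, m (a w)) * ∏ v ∈ Finset.univ.erase u, f (a u) (a v)
        = m (a u) * ∏ v ∈ Finset.univ.erase u, (m (a v) * f (a u) (a v)) := by
    intro a
    rw [← Finset.mul_prod_erase Finset.univ (fun w => m (a w)) (Finset.mem_univ u),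
      Finset.prod_mul_distrib, mul_assoc]
  simp_rw [step1]
  set e := Equiv.funSplitAt u (Fin L → Bool) with he
  rw [← Equiv.sum_comp e.symm]
  rw [Fintype.sum_prod_type]
  refine Finset.sum_congr rfl fun b _ => ?_
  have hb : ∀ g : {v : Fin n // v ≠ u} → (Fin L → Bool), (e.symm (b, g)) u = b := by
    intro g; simp [he, Equiv.funSplitAt, Equiv.piSplitAt]
  have hg : ∀ (g : {v : Fin n // v ≠ u} → (Fin L → Bool)) (v : Fin n) (hv : v ≠ u),
      (e.symm (b, g)) v = g ⟨v, hv⟩ := by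
    intro g v hv; simp [he, Equiv.funSplitAt, Equiv.piSplitAt, hv]
  have key : ∀ g : {v : Fin n // v ≠ u} → (Fin L → Bool),
      m ((e.symm (b, g)) u) * ∏ v ∈ Finset.univ.erase u,
          (m ((e.symm (b, g)) v) * f ((e.symm (b, g)) u) ((e.symm (b, g)) v))
        = m b * ∏ v : {v : Fin n // v ≠ u}, (m (g v) * f b (g v)) := by
    intro g
    rw [hb g]
    congr 1
    rw [Finset.prod_subtype (p := fun v : Fin n => v ≠ u) (Finset.univ.erase u)
        (fun v => by simp) (fun v => m ((e.symm (b, g)) v) * f b ((e.symm (b, g)) v))]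
    refine Finset.prod_congr rfl fun v _ => ?_
    rw [hg g (v : Fin n) v.2, Subtype.eta]
  calc (∑ g : {v : Fin n // v ≠ u} → (Fin L → Bool),
          m ((e.symm (b, g)) u) * ∏ v ∈ Finset.univ.erase u,
            (m ((e.symm (b, g)) v) * f ((e.symm (b, g)) u) ((e.symm (b, g)) v)))
      = ∑ g : {v : Fin n // v ≠ u} → (Fin L → Bool),
          m b * ∏ v : {v : Fin n // v ≠ u}, (m (g v) * f b (g v)) :=
        Finset.sum_congr rfl fun g _ => key g
    _ = m b * ∑ g : {v : Fin n // v ≠ u} → (Fin L → Bool),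
          ∏ v : {v : Fin n // v ≠ u}, (m (g v) * f b (g v)) := by rw [Finset.mul_sum]
    _ = m b * (∑ c : Fin L → Bool, m c * f b c) ^ (n - 1) := by
        rw [← Fintype.piFinset_univ,
          Finset.sum_prod_piFinset Finset.univ (fun _ c => m c * f b c),
          Finset.prod_const, Finset.card_univ, card_ne]
end prob

noncomputable def wgt (μ1 : ℝ) {L : ℕ} (b : Fin L → Bool) : ℝ := ∏ ℓ, μB μ1 (b ℓ)

section inner
variable {L : ℕ} (q : Bool → Bool → ℝ) (μ1 : ℝ)

lemma wgt_nonneg (h0 : 0 ≤ μ1) (h1 : μ1 ≤ 1) (b : Fin L → Bool) : 0 ≤ wgt μ1 b :=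
  Finset.prod_nonneg fun ℓ _ => by cases b ℓ <;> simp [μB] <;> linarith

lemma sum_wgt : (∑ b : Fin L → Bool, wgt μ1 b) = 1 := by
  simp only [wgt]
  rw [← Fintype.piFinset_univ, Finset.sum_prod_piFinset Finset.univ (fun _ t => μB μ1 t)]
  have : (∑ t : Bool, μB μ1 t) = 1 := by
    rw [Fintype.sum_bool]; simp [μB]
  rw [this, Finset.prod_const, one_pow]

lemma sum_wgt_QL (b : Fin L → Bool) :
    (∑ c : Fin L → Bool, wgt μ1 c * QL q b c) = ∏ ℓ, Gam μ1 q (b ℓ) := by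
  have : ∀ c : Fin L → Bool, wgt μ1 c * QL q b c = ∏ ℓ, (μB μ1 (c ℓ) * q (b ℓ) (c ℓ)) := by
    intro c; rw [wgt, QL, ← Finset.prod_mul_distrib]
  simp_rw [this]
  rw [← Fintype.piFinset_univ, Finset.sum_prod_piFinset Finset.univ
    (fun ℓ t => μB μ1 t * q (b ℓ) t)]
  refine Finset.prod_congr rfl fun ℓ _ => ?_
  rw [Fintype.sum_bool, Gam]
  simp [μB]
  ring

lemma Gam_pos (hq : ∀ a b, 0 < q a b ∧ q a b < 1) (h0 : 0 < μ1) (h1 : μ1 < 1) (a : Bool) :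
    0 < Gam μ1 q a := by
  have := (hq a false).1; have := (hq a true).1
  have : 0 < 1 - μ1 := by linarith
  rw [Gam]; positivity

lemma Gam_lt_one (hq : ∀ a b, 0 < q a b ∧ q a b < 1) (h0 : 0 < μ1) (h1 : μ1 < 1) (a : Bool) :
    Gam μ1 q a < 1 := by
  have h2 := (hq a false).2; have h3 := (hq a true).2
  have h4 : 0 < 1 - μ1 := by linarith
  rw [Gam]
  nlinarith

lemma prodGam_pos (hq : ∀ a b, 0 < q a b ∧ q a b < 1) (h0 : 0 < μ1) (h1 : μ1 < 1)
    (b : Fin L → Bool) : 0 < ∏ ℓ, Gam μ1 q (b ℓ) :=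
  Finset.prod_pos fun ℓ _ => Gam_pos q μ1 hq h0 h1 _

lemma prodGam_le_one (hq : ∀ a b, 0 < q a b ∧ q a b < 1) (h0 : 0 < μ1) (h1 : μ1 < 1)
    (b : Fin L → Bool) : ∏ ℓ, Gam μ1 q (b ℓ) ≤ 1 :=
  Finset.prod_le_one (fun ℓ _ => (Gam_pos q μ1 hq h0 h1 _).le)
    (fun ℓ _ => (Gam_lt_one q μ1 hq h0 h1 _).le)

lemma innerSum (hq : ∀ a b, 0 < q a b ∧ q a b < 1) (h0 : 0 < μ1) (h1 : μ1 < 1)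
    (b : Fin L → Bool) :
    (∑ c : Fin L → Bool, ENNReal.ofReal (wgt μ1 c) * ENNReal.ofReal (1 - QL q b c))
      = ENNReal.ofReal (1 - ∏ ℓ, Gam μ1 q (b ℓ)) := by
  have hQL1 : ∀ c : Fin L → Bool, QL q b c ≤ 1 :=
    fun c => Finset.prod_le_one (fun ℓ _ => (hq _ _).1.le) (fun ℓ _ => (hq _ _).2.le)
  have : ∀ c : Fin L → Bool,
      ENNReal.ofReal (wgt μ1 c) * ENNReal.ofReal (1 - QL q b c)
        = ENNReal.ofReal (wgt μ1 c * (1 - QL q b c)) :=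
    fun c => (ENNReal.ofReal_mul (wgt_nonneg μ1 h0.le h1.le c)).symm
  simp_rw [this]
  rw [← ENNReal.ofReal_sum_of_nonneg (fun c _ =>
    mul_nonneg (wgt_nonneg μ1 h0.le h1.le c) (by linarith [hQL1 c]))]
  congr 1
  have : ∀ c : Fin L → Bool, wgt μ1 c * (1 - QL q b c) = wgt μ1 c - wgt μ1 c * QL q b c := by
    intro c; ring
  simp_rw [this]
  rw [Finset.sum_sub_distrib, sum_wgt, sum_wgt_QL]
end inner

noncomputable def Phi (μ1 : ℝ) (q : Bool → Bool → ℝ) (n L : ℕ) : ℝ :=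
  ∑ b : Fin L → Bool, wgt μ1 b * (1 - ∏ ℓ, Gam μ1 q (b ℓ)) ^ (n - 1)


section expectation
variable {n L : ℕ} (q : Bool → Bool → ℝ) (μ1 : ℝ)
  (hq : ∀ a b, 0 < q a b ∧ q a b < 1) (h0 : 0 < μ1) (h1 : μ1 < 1)

include hq h0 h1 in
lemma iso_prob_real (u : Fin n) :
    (magMeasure n L μ1 {ω | Isolated q ω u}).toReal = Phi μ1 q n L := by
  have hw : ∀ a : Fin n → Fin L → Bool, ∀ w : Fin n,
      (∏ ℓ : Fin L, bern μ1 {a w ℓ}) = ENNReal.ofReal (wgt μ1 (a w)) := by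
    intro a w
    rw [wgt, ENNReal.ofReal_prod_of_nonneg (fun ℓ _ => by cases a w ℓ <;> simp [μB] <;> linarith)]
    exact Finset.prod_congr rfl fun ℓ _ => bern_singleton μ1 h0.le h1.le _
  rw [iso_prob q μ1 hq u]
  simp_rw [hw]
  rw [factorize (fun b => ENNReal.ofReal (wgt μ1 b))
    (fun b c => ENNReal.ofReal (1 - QL q b c)) u]
  simp_rw [innerSum q μ1 hq h0 h1]
  rw [ENNReal.toReal_sum (fun b _ => by
    exact ENNReal.mul_ne_top ENNReal.ofReal_ne_top (by
      exact ENNReal.pow_ne_top ENNReal.ofReal_ne_top))]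
  refine Finset.sum_congr rfl fun b _ => ?_
  rw [ENNReal.toReal_mul, ENNReal.toReal_pow, ENNReal.toReal_ofReal
    (wgt_nonneg μ1 h0.le h1.le b), ENNReal.toReal_ofReal
    (by linarith [prodGam_le_one q μ1 hq h0 h1 b])]

include hq h0 h1 in
lemma expectation_eq :
    ∫ ω, (numIsolated q ω : ℝ) ∂(magMeasure n L μ1) = n * Phi μ1 q n L := by
  classical
  haveI := bern_prob μ1 h0.le h1.le
  haveI : IsProbabilityMeasure (magMeasure n L μ1) := by
    rw [magMeasure]; infer_instance
  have hfun : ∀ ω : (Fin n → Fin L → Bool) × (Fin n × Fin n → ℝ),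
      (numIsolated q ω : ℝ)
        = ∑ u : Fin n, Set.indicator {ω' | Isolated q ω' u} (fun _ => (1:ℝ)) ω := by
    intro ω
    rw [numIsolated]
    rw [Finset.card_filter]
    push_cast
    refine Finset.sum_congr rfl fun u _ => ?_
    by_cases h : Isolated q ω u <;> simp [h, Set.indicator]
  have : (fun ω => (numIsolated q ω : ℝ))
      = fun ω => ∑ u : Fin n, Set.indicator {ω' | Isolated q ω' u} (fun _ => (1:ℝ)) ω :=
    funext hfun
  rw [this, integral_finset_sum _ (fun u _ => ?_)]
  · have : ∀ u : Fin n,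
        ∫ ω, Set.indicator {ω' | Isolated q ω' u} (fun _ => (1:ℝ)) ω ∂(magMeasure n L μ1)
          = (magMeasure n L μ1 {ω' | Isolated q ω' u}).toReal := by
      intro u
      rw [integral_indicator_const (1:ℝ) (measurableSet_isolated q u)]
      simp; rfl
    simp_rw [this, iso_prob_real q μ1 hq h0 h1]
    rw [Finset.sum_const, Finset.card_univ, Fintype.card_fin, nsmul_eq_mul]
  · exact (integrable_const (1:ℝ)).indicator (measurableSet_isolated q u)
end expectation

section bounds
variable {n L : ℕ} {q : Bool → Bool → ℝ} {μ1 : ℝ}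
  (hq : ∀ a b, 0 < q a b ∧ q a b < 1) (h0 : 0 < μ1) (h1 : μ1 < 1)

include hq h0 h1 in
lemma Phi_ge : (1 - μ1) ^ L * (1 - Gam μ1 q false ^ L) ^ (n - 1) ≤ Phi μ1 q n L := by
  have key : wgt μ1 (fun _ : Fin L => false)
      * (1 - ∏ ℓ : Fin L, Gam μ1 q ((fun _ => false) ℓ)) ^ (n - 1)
      = (1 - μ1) ^ L * (1 - Gam μ1 q false ^ L) ^ (n - 1) := by
    rw [wgt]
    simp [μB, Finset.prod_const]
  rw [← key, Phi]
  refine Finset.single_le_sum (f := fun b : Fin L → Bool =>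
    wgt μ1 b * (1 - ∏ ℓ, Gam μ1 q (b ℓ)) ^ (n - 1)) (fun b _ => ?_) (Finset.mem_univ _)
  exact mul_nonneg (wgt_nonneg μ1 h0.le h1.le b)
    (pow_nonneg (by linarith [prodGam_le_one q μ1 hq h0 h1 b]) _)

include hq h0 h1 in
lemma Phi_nonneg : 0 ≤ Phi μ1 q n L :=
  Finset.sum_nonneg fun b _ => mul_nonneg (wgt_nonneg μ1 h0.le h1.le b)
    (pow_nonneg (by linarith [prodGam_le_one q μ1 hq h0 h1 b]) _)

include hq h0 h1 in
lemma Phi_le (hΓ : Gam μ1 q false < Gam μ1 q true) :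
    Phi μ1 q n L ≤ (1 - Gam μ1 q false ^ L) ^ (n - 1) := by
  have hγ0 : 0 < Gam μ1 q false := Gam_pos q μ1 hq h0 h1 false
  have hstep : ∀ b : Fin L → Bool,
      wgt μ1 b * (1 - ∏ ℓ, Gam μ1 q (b ℓ)) ^ (n - 1)
        ≤ wgt μ1 b * (1 - Gam μ1 q false ^ L) ^ (n - 1) := by
    intro b
    refine mul_le_mul_of_nonneg_left ?_ (wgt_nonneg μ1 h0.le h1.le b)
    refine pow_le_pow_left₀ (by linarith [prodGam_le_one q μ1 hq h0 h1 b]) ?_ _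
    have : Gam μ1 q false ^ L ≤ ∏ ℓ : Fin L, Gam μ1 q (b ℓ) := by
      have : (∏ _ℓ : Fin L, Gam μ1 q false) ≤ ∏ ℓ : Fin L, Gam μ1 q (b ℓ) :=
        Finset.prod_le_prod (fun ℓ _ => hγ0.le) (fun ℓ _ => by cases b ℓ <;> simp [hΓ.le])
      simpa using this
    linarith
  calc Phi μ1 q n L ≤ ∑ b : Fin L → Bool, wgt μ1 b * (1 - Gam μ1 q false ^ L) ^ (n - 1) :=
        Finset.sum_le_sum fun b _ => hstep b
    _ = (1 - Gam μ1 q false ^ L) ^ (n - 1) := by rw [← Finset.sum_mul, sum_wgt, one_mul]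
end bounds

section asym
variable {ρ : ℝ} {L : ℕ → ℕ}

lemma tendsto_LdivLog (hρ : 0 < ρ) (hL : Admissible ρ L) :
    Tendsto (fun n : ℕ => (L n : ℝ) / Real.log n) atTop (nhds ρ) := by
  have hne : ∀ᶠ n : ℕ in atTop, ρ * Real.log n ≠ 0 := by
    filter_upwards [eventually_ge_atTop 2] with n hn
    have : (0:ℝ) < Real.log n := Real.log_pos (by exact_mod_cast by omega)
    positivity
  have h1 := (Asymptotics.isEquivalent_iff_tendsto_one hne).mp hL
  have h2 : Tendsto (fun n : ℕ => ρ * ((L n : ℝ) / (ρ * Real.log n))) atTop (nhds (ρ * 1)) :=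
    (tendsto_const_nhds).mul h1
  rw [mul_one] at h2
  refine h2.congr' ?_
  filter_upwards [eventually_ge_atTop 2] with n hn
  have hlog : Real.log n ≠ 0 := ne_of_gt (Real.log_pos (by exact_mod_cast by omega))
  field_simp

lemma exp_form (c : ℝ) (hc : 0 < c) :
    ∀ n : ℕ, 1 ≤ n → (n : ℝ) * c ^ (L n) = Real.exp (Real.log n + (L n : ℝ) * Real.log c) := by
  intro n hn
  rw [Real.exp_add, Real.exp_log (by exact_mod_cast by omega : (0:ℝ) < n)]
  congr 1
  rw [← Real.log_pow, Real.exp_log (pow_pos hc _)]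

-- E n := log n + L n * log c equals log n * (1 + (Ln/log n) log c) for log n ≠ 0
lemma E_eq (c : ℝ) : ∀ n : ℕ, 2 ≤ n →
    Real.log n + (L n : ℝ) * Real.log c
      = Real.log n * (1 + ((L n : ℝ) / Real.log n) * Real.log c) := by
  intro n hn
  have hlog : Real.log n ≠ 0 := ne_of_gt (Real.log_pos (by exact_mod_cast by omega))
  field_simp

lemma tendsto_E_atTop (hρ : 0 < ρ) (hL : Admissible ρ L) {c : ℝ} (hpos : 0 < 1 + ρ * Real.log c) :
    Tendsto (fun n : ℕ => Real.log n + (L n : ℝ) * Real.log c) atTop atTop := by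
  have hcoef : Tendsto (fun n : ℕ => 1 + ((L n : ℝ) / Real.log n) * Real.log c) atTop
      (nhds (1 + ρ * Real.log c)) :=
    (tendsto_const_nhds).add ((tendsto_LdivLog hρ hL).mul tendsto_const_nhds)
  have hlog : Tendsto (fun n : ℕ => Real.log n) atTop atTop :=
    Real.tendsto_log_atTop.comp tendsto_natCast_atTop_atTop
  have := hlog.atTop_mul_pos hpos hcoef
  refine this.congr' ?_
  filter_upwards [eventually_ge_atTop 2] with n hn
  exact (E_eq c n hn).symm

lemma tendsto_E_atBot (hρ : 0 < ρ) (hL : Admissible ρ L) {c : ℝ} (hneg : 1 + ρ * Real.log c < 0) :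
    Tendsto (fun n : ℕ => Real.log n + (L n : ℝ) * Real.log c) atTop atBot := by
  have hcoef : Tendsto (fun n : ℕ => 1 + ((L n : ℝ) / Real.log n) * Real.log c) atTop
      (nhds (1 + ρ * Real.log c)) :=
    (tendsto_const_nhds).add ((tendsto_LdivLog hρ hL).mul tendsto_const_nhds)
  have hlog : Tendsto (fun n : ℕ => Real.log n) atTop atTop :=
    Real.tendsto_log_atTop.comp tendsto_natCast_atTop_atTop
  have := hlog.atTop_mul_neg hneg hcoef
  refine this.congr' ?_
  filter_upwards [eventually_ge_atTop 2] with n hn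
  exact (E_eq c n hn).symm

lemma tendsto_n_pow_atTop (hρ : 0 < ρ) (hL : Admissible ρ L) {c : ℝ} (hc : 0 < c)
    (hpos : 0 < 1 + ρ * Real.log c) :
    Tendsto (fun n : ℕ => (n : ℝ) * c ^ (L n)) atTop atTop := by
  have := Real.tendsto_exp_atTop.comp (tendsto_E_atTop hρ hL hpos)
  refine this.congr' ?_
  filter_upwards [eventually_ge_atTop 1] with n hn
  exact (exp_form c hc n hn).symm

lemma tendsto_n_pow_zero (hρ : 0 < ρ) (hL : Admissible ρ L) {c : ℝ} (hc : 0 < c)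
    (hneg : 1 + ρ * Real.log c < 0) :
    Tendsto (fun n : ℕ => (n : ℝ) * c ^ (L n)) atTop (nhds 0) := by
  have := Real.tendsto_exp_atBot.comp (tendsto_E_atBot hρ hL hneg)
  refine this.congr' ?_
  filter_upwards [eventually_ge_atTop 1] with n hn
  exact (exp_form c hc n hn).symm

-- log n - (n-1) c^{L n} → -∞ when 1 + ρ log c > 0
lemma tendsto_log_sub_atBot (hρ : 0 < ρ) (hL : Admissible ρ L) {c : ℝ} (hc : 0 < c)
    (hpos : 0 < 1 + ρ * Real.log c) :
    Tendsto (fun n : ℕ => Real.log n - ((n : ℝ) - 1) * c ^ (L n)) atTop atBot := by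
  set k := 1 + ρ * Real.log c with hk
  -- eventually, (n-1) c^{Ln} ≥ (1/2) n c^{Ln} = (1/2) exp(E n) ≥ (1/2) n^{k/2}
  -- and log n ≤ (1/4) n^{k/2}
  have hcoef : Tendsto (fun n : ℕ => 1 + ((L n : ℝ) / Real.log n) * Real.log c) atTop
      (nhds k) :=
    (tendsto_const_nhds).add ((tendsto_LdivLog hρ hL).mul tendsto_const_nhds)
  have hev1 : ∀ᶠ n : ℕ in atTop, k / 2 ≤ 1 + ((L n : ℝ) / Real.log n) * Real.log c :=
    hcoef.eventually_const_le (by linarith : k/2 < k)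
  have hlittle : (fun x : ℝ => Real.log x) =o[atTop] fun x : ℝ => x ^ (k / 2) :=
    isLittleO_log_rpow_atTop (by linarith)
  have hev2 : ∀ᶠ x : ℝ in atTop, |Real.log x| ≤ (1/4) * |x ^ (k / 2)| :=
    hlittle.bound (by norm_num)
  have hev2' : ∀ᶠ n : ℕ in atTop, |Real.log (n:ℝ)| ≤ (1/4) * |(n:ℝ) ^ (k / 2)| :=
    tendsto_natCast_atTop_atTop.eventually hev2
  have hmain : ∀ᶠ n : ℕ in atTop,
      Real.log n - ((n : ℝ) - 1) * c ^ (L n) ≤ -(1/4) * (n:ℝ) ^ (k/2) := by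
    filter_upwards [hev1, hev2', eventually_ge_atTop 2] with n h1 h2 hn
    have hn2 : (2:ℝ) ≤ (n:ℝ) := by exact_mod_cast hn
    have hnpos : (0:ℝ) < n := by linarith
    have hrpow_pos : (0:ℝ) < (n:ℝ) ^ (k/2) := Real.rpow_pos_of_pos hnpos _
    have hlogle : Real.log n ≤ (1/4) * (n:ℝ) ^ (k/2) := by
      have := h2
      rw [abs_of_nonneg (Real.log_nonneg (by linarith)), abs_of_nonneg hrpow_pos.le] at this
      exact this
    have hE : (k/2) * Real.log n ≤ Real.log n + (L n : ℝ) * Real.log c := by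
      rw [E_eq c n hn]
      have hlogpos : (0:ℝ) < Real.log n := Real.log_pos (by linarith)
      calc (k/2) * Real.log n = Real.log n * (k/2) := mul_comm _ _
        _ ≤ Real.log n * (1 + ((L n : ℝ) / Real.log n) * Real.log c) :=
          mul_le_mul_of_nonneg_left h1 hlogpos.le
    have hexp : (n:ℝ) ^ (k/2) ≤ (n:ℝ) * c ^ (L n) := by
      rw [exp_form c hc n (by omega)]
      rw [Real.rpow_def_of_pos hnpos]
      exact Real.exp_le_exp.mpr (by linarith [hE])
    have hfac : (n:ℝ) / 2 ≤ (n:ℝ) - 1 := by linarith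
    have hcpow : (0:ℝ) < c ^ (L n) := pow_pos hc _
    have : ((n:ℝ)/2) * c ^ (L n) ≤ ((n:ℝ) - 1) * c ^ (L n) :=
      mul_le_mul_of_nonneg_right hfac hcpow.le
    have h3 : (1/2) * (n:ℝ) ^ (k/2) ≤ ((n:ℝ) - 1) * c ^ (L n) := by
      calc (1/2) * (n:ℝ) ^ (k/2) ≤ (1/2) * ((n:ℝ) * c ^ (L n)) := by linarith [hexp]
        _ = ((n:ℝ)/2) * c ^ (L n) := by ring
        _ ≤ _ := this
    nlinarith [hrpow_pos]
  have hbot : Tendsto (fun n : ℕ => -(1/4) * (n:ℝ) ^ (k/2)) atTop atBot := by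
    have h4 : Tendsto (fun x : ℝ => x ^ (k/2)) atTop atTop :=
      tendsto_rpow_atTop (by linarith)
    have := (h4.comp tendsto_natCast_atTop_atTop).atTop_mul_neg
      (by norm_num : -(1/4:ℝ) < 0) tendsto_const_nhds
    refine this.congr fun n => ?_
    simp [Function.comp, mul_comm]
  exact tendsto_atBot_mono' atTop hmain hbot
end asym

theorem mag_zero_infinity_law_first_moment_case_pos
    (μ1 : ℝ) (hμ1 : 0 < μ1) (hμ1' : μ1 < 1)
    (q : Bool → Bool → ℝ) (hq : ∀ a b, 0 < q a b ∧ q a b < 1)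
    (hqsym : q false true = q true false)
    (hΓ : Gam μ1 q false < Gam μ1 q true)
    (ρ : ℝ) (hρ : 0 < ρ)
    (hμ0 : 1 + ρ * Real.log (1 - μ1) > 0)
    (L : ℕ → ℕ) (hL : Admissible ρ L) :
    (1 + ρ * Real.log (Gam μ1 q false) < 0 →
      Tendsto (fun n => ∫ ω, (numIsolated q ω : ℝ) ∂(magMeasure n (L n) μ1))
        atTop atTop) ∧
    (1 + ρ * Real.log (Gam μ1 q false) > 0 →
      Tendsto (fun n => ∫ ω, (numIsolated q ω : ℝ) ∂(magMeasure n (L n) μ1))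
        atTop (nhds 0)) := by
  set γ := Gam μ1 q false with hγdef
  have hγ0 : 0 < γ := Gam_pos q μ1 hq hμ1 hμ1' false
  have hγ1 : γ < 1 := Gam_lt_one q μ1 hq hμ1 hμ1' false
  have hμ0pos : 0 < 1 - μ1 := by linarith
  have hEeq : ∀ n : ℕ, ∫ ω, (numIsolated q ω : ℝ) ∂(magMeasure n (L n) μ1) = n * Phi μ1 q n (L n) :=
    fun n => expectation_eq q μ1 hq hμ1 hμ1'
  have hγpow_le_one : ∀ n, γ ^ (L n) ≤ 1 :=
    fun n => pow_le_one₀ hγ0.le hγ1.le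
  have hγpow_pos : ∀ n, 0 < γ ^ (L n) := fun n => pow_pos hγ0 _
  constructor
  · -- case → ∞
    intro hneg
    have hA : Tendsto (fun n : ℕ => (n : ℝ) * (1 - μ1) ^ (L n)) atTop atTop :=
      tendsto_n_pow_atTop hρ hL hμ0pos hμ0
    have hB : Tendsto (fun n : ℕ => (n : ℝ) * γ ^ (L n)) atTop (nhds 0) :=
      tendsto_n_pow_zero hρ hL hγ0 hneg
    have hev : ∀ᶠ n : ℕ in atTop, (1/2 : ℝ) ≤ (1 - γ ^ (L n)) ^ (n - 1) := by
      filter_upwards [hB.eventually_le_const (by norm_num : (0:ℝ) < 1/2)] with n hn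
      have hx := hγpow_pos n
      have hx1 := hγpow_le_one n
      have hbern : 1 + (n - 1 : ℕ) * (-(γ ^ (L n))) ≤ (1 + (-(γ ^ (L n)))) ^ (n - 1 : ℕ) :=
        one_add_mul_le_pow (by linarith) (n - 1)
      have hcast : ((n - 1 : ℕ) : ℝ) ≤ (n : ℝ) := by
        exact_mod_cast Nat.cast_le.mpr (Nat.sub_le n 1)
      have : 1 - (n : ℝ) * γ ^ (L n) ≤ (1 - γ ^ (L n)) ^ (n - 1) := by
        have h1 : 1 - (n:ℝ) * γ ^ (L n) ≤ 1 + ((n - 1 : ℕ) : ℝ) * (-(γ ^ (L n))) := by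
          have := mul_le_mul_of_nonneg_right hcast hx.le
          linarith
        calc 1 - (n : ℝ) * γ ^ (L n) ≤ 1 + ((n - 1 : ℕ) : ℝ) * (-(γ ^ (L n))) := h1
          _ ≤ (1 + (-(γ ^ (L n)))) ^ (n - 1) := hbern
          _ = (1 - γ ^ (L n)) ^ (n - 1) := by ring_nf
      linarith
    have hlow : Tendsto (fun n : ℕ => ((n : ℝ) * (1 - μ1) ^ (L n)) * (1/2 : ℝ)) atTop atTop :=
      hA.atTop_mul_const (by norm_num)
    refine tendsto_atTop_mono' atTop ?_ hlow
    filter_upwards [hev] with n hn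
    have h1 : ((n : ℝ) * (1 - μ1) ^ (L n)) * (1/2 : ℝ)
        ≤ ((n : ℝ) * (1 - μ1) ^ (L n)) * ((1 - γ ^ (L n)) ^ (n - 1)) := by
      refine mul_le_mul_of_nonneg_left hn ?_
      positivity
    have h2 : ((n : ℝ) * (1 - μ1) ^ (L n)) * ((1 - γ ^ (L n)) ^ (n - 1))
        ≤ (n : ℝ) * Phi μ1 q n (L n) := by
      rw [mul_assoc]
      exact mul_le_mul_of_nonneg_left (Phi_ge hq hμ1 hμ1') (Nat.cast_nonneg n)
    rw [hEeq n]
    linarith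
  · -- case → 0
    intro hpos
    have hupper : Tendsto
        (fun n : ℕ => Real.exp (Real.log n - ((n : ℝ) - 1) * γ ^ (L n))) atTop (nhds 0) :=
      Real.tendsto_exp_atBot.comp (tendsto_log_sub_atBot hρ hL hγ0 hpos)
    refine tendsto_of_tendsto_of_tendsto_of_le_of_le' tendsto_const_nhds hupper ?_ ?_
    · filter_upwards with n
      rw [hEeq n]
      exact mul_nonneg (Nat.cast_nonneg n) (Phi_nonneg hq hμ1 hμ1')
    · filter_upwards [eventually_ge_atTop 1] with n hn
      rw [hEeq n]
      have hx := hγpow_pos n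
      have hx1 := hγpow_le_one n
      have step1 : (n : ℝ) * Phi μ1 q n (L n) ≤ (n : ℝ) * (1 - γ ^ (L n)) ^ (n - 1) :=
        mul_le_mul_of_nonneg_left (Phi_le hq hμ1 hμ1' hΓ) (Nat.cast_nonneg n)
      have step2 : (1 - γ ^ (L n)) ^ (n - 1) ≤ Real.exp (-(γ ^ (L n))) ^ (n - 1) := by
        refine pow_le_pow_left₀ (by linarith) ?_ _
        linarith [Real.add_one_le_exp (-(γ ^ (L n)))]
      have step3 : Real.exp (-(γ ^ (L n))) ^ (n - 1)
          = Real.exp (-(((n - 1 : ℕ) : ℝ) * γ ^ (L n))) := by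
        rw [← Real.exp_nat_mul]
        ring_nf
      have hcast : ((n - 1 : ℕ) : ℝ) = (n : ℝ) - 1 := by
        have : (1:ℕ) ≤ n := hn
        push_cast [Nat.cast_sub this]
        ring
      have step4 : (n : ℝ) * Real.exp (-(((n:ℝ) - 1) * γ ^ (L n)))
          = Real.exp (Real.log n - ((n : ℝ) - 1) * γ ^ (L n)) := by
        rw [show Real.log ↑n - ((n:ℝ) - 1) * γ ^ (L n)
            = Real.log ↑n + (-(((n:ℝ) - 1) * γ ^ (L n))) by ring,
          Real.exp_add, Real.exp_log (by exact_mod_cast by omega : (0:ℝ) < n)]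
      calc (n : ℝ) * Phi μ1 q n (L n)
          ≤ (n : ℝ) * (1 - γ ^ (L n)) ^ (n - 1) := step1
        _ ≤ (n : ℝ) * Real.exp (-(γ ^ (L n))) ^ (n - 1) :=
            mul_le_mul_of_nonneg_left step2 (Nat.cast_nonneg n)
        _ = (n : ℝ) * Real.exp (-(((n:ℝ) - 1) * γ ^ (L n))) := by rw [step3, hcast]
        _ = _ := step4
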